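/- The exponential vectors {EXP h : h ∈ H} in the symmetric Fock space over a Hilbert space H are linearly independent. -/

import Mathlib

open scoped RealInnerProductSpace

/-- A separating vector for a finite set in a real inner product space. -/
lemma exists_inner_injOn {H : Type*} [NormedAddCommGroup H] [InnerProductSpace ℝ H]
    (s : Finset H) : ∃ g : H, Set.InjOn (fun h => ⟪h, g⟫) (s : Set H) := by
  set ι := {p : {x // x ∈ s} × {x // x ∈ s} // ((p.1 : H)) ≠ ((p.2 : H))} with hι
  have : Finite ι := Subtype.finite
  set p : ι → Subspace ℝ H := fun q =>
    LinearMap.ker ((innerSL ℝ (((q.1.1 : H)) - ((q.1.2 : H)))).toLinearMap) with hp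
  have hne : ¬ (⋃ i, (p i : Set H) = Set.univ) := by
    intro hcov
    obtain ⟨q, hq⟩ := Subspace.exists_eq_top_of_iUnion_eq_univ hcov
    have hv : (((q.1.1 : H)) - ((q.1.2 : H))) ≠ 0 := sub_ne_zero.2 q.2
    have hmem : (((q.1.1 : H)) - ((q.1.2 : H))) ∈ p q := by rw [hq]; trivial
    have h0 : ⟪((q.1.1 : H)) - ((q.1.2 : H)), ((q.1.1 : H)) - ((q.1.2 : H))⟫ = 0 := hmem
    exact hv (inner_self_eq_zero.mp h0)
  have hex : ∃ g : H, g ∉ ⋃ i, (p i : Set H) := by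
    by_contra hc
    push_neg at hc
    exact hne (Set.eq_univ_of_forall hc)
  obtain ⟨g, hg⟩ := hex
  refine ⟨g, fun a ha b hb hab => ?_⟩
  simp only at hab
  by_contra hne'
  apply hg
  refine Set.mem_iUnion.2 ⟨⟨(⟨a, ha⟩, ⟨b, hb⟩), hne'⟩, ?_⟩
  show ⟪a - b, g⟫ = 0
  rw [inner_sub_left, hab, sub_self]

/-- The symmetric Fock space over `H` is modeled as `lp S 2`, where `S n` is the `n`-th
symmetric tensor power of `H` (characterized by `⟪h^{⊗n}, g^{⊗n}⟫ = ⟪h, g⟫ ^ n` for the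
elementary symmetric tensors `tpow n h = h^{⊗n}`), and the exponential vector `E h = EXP h`
has `n`-th component `h^{⊗n} / √(n!)`.  The family of exponential vectors
`{EXP h : h ∈ H}` is linearly independent. -/
theorem fock_exp_linearIndependent
    {H : Type*} [NormedAddCommGroup H] [InnerProductSpace ℝ H]
    (S : ℕ → Type*) [∀ n, NormedAddCommGroup (S n)] [∀ n, InnerProductSpace ℝ (S n)]
    (tpow : ∀ n, H → S n)
    (hpow : ∀ (n : ℕ) (u v : H), ⟪tpow n u, tpow n v⟫ = ⟪u, v⟫ ^ n)
    (E : H → lp S 2)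
    (hE : ∀ (h : H) (n : ℕ), E h n = (Real.sqrt (n.factorial : ℝ))⁻¹ • tpow n h) :
    LinearIndependent ℝ E := by
  -- Step 1: inner product formula  ⟪E u, E v⟫ = exp ⟪u, v⟫
  have key : ∀ u v : H, ⟪E u, E v⟫ = Real.exp ⟪u, v⟫ := by
    intro u v
    rw [lp.inner_eq_tsum]
    have hterm : ∀ n : ℕ, ⟪E u n, E v n⟫ = ((n.factorial : ℝ))⁻¹ • ⟪u, v⟫ ^ n := by
      intro n
      rw [hE, hE, real_inner_smul_left, real_inner_smul_right, hpow]
      have hfac : (0 : ℝ) ≤ (n.factorial : ℝ) := Nat.cast_nonneg _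
      rw [smul_eq_mul, ← mul_assoc, ← mul_inv, Real.mul_self_sqrt hfac]
    simp_rw [hterm]
    rw [Real.exp_eq_exp_ℝ, NormedSpace.exp_eq_tsum ℝ]
  -- Step 2: linear independence
  rw [linearIndependent_iff']
  intro s c hsum h hmem
  -- pairing with E w gives  ∑ c h * exp ⟪h, w⟫ = 0
  have hrel : ∀ w : H, ∑ a ∈ s, c a * Real.exp ⟪a, w⟫ = 0 := by
    intro w
    have := congrArg (fun x : lp S 2 => ⟪x, E w⟫) hsum
    simpa [sum_inner, real_inner_smul_left, key] using this
  -- choose separating vector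
  obtain ⟨g, hg⟩ := exists_inner_injOn s
  -- enumerate s
  set n := s.card with hn
  set e : {x // x ∈ s} ≃ Fin n := s.equivFin with he
  set f : Fin n → ℝ := fun j => Real.exp ⟪((e.symm j : {x // x ∈ s}) : H), g⟫ with hfdef
  set v : Fin n → ℝ := fun j => c ((e.symm j : {x // x ∈ s}) : H) with hvdef
  have hf : Function.Injective f := by
    intro i j hij
    have h1 : ⟪((e.symm i : {x // x ∈ s}) : H), g⟫ = ⟪((e.symm j : {x // x ∈ s}) : H), g⟫ :=
      Real.exp_injective hij
    have h2 : ((e.symm i : {x // x ∈ s}) : H) = ((e.symm j : {x // x ∈ s}) : H) :=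
      hg (e.symm i).2 (e.symm j).2 h1
    exact e.symm.injective (Subtype.ext h2)
  have hv : v = 0 := by
    apply Matrix.eq_zero_of_forall_pow_sum_mul_pow_eq_zero hf
    intro i
    set G : {x // x ∈ s} → ℝ := fun a => c (a : H) * Real.exp ⟪(a : H), ((i : ℕ) : ℝ) • g⟫ with hG
    have hterm : ∀ j : Fin n, v j * f j ^ (i : ℕ) = G (e.symm j) := by
      intro j
      rw [hG]
      simp only [hvdef, hfdef]
      rw [real_inner_smul_right]
      rw [← Real.exp_nat_mul]
    calc ∑ j : Fin n, v j * f j ^ (i : ℕ) = ∑ j : Fin n, G (e.symm j) := by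
            exact Finset.sum_congr rfl fun j _ => hterm j
      _ = ∑ a : {x // x ∈ s}, G a := Equiv.sum_comp e.symm G
      _ = ∑ a ∈ s, c a * Real.exp ⟪a, ((i : ℕ) : ℝ) • g⟫ :=
            Finset.sum_coe_sort s (fun a => c a * Real.exp ⟪a, ((i : ℕ) : ℝ) • g⟫)
      _ = 0 := hrel _
  have h4 := congrFun hv (e ⟨h, hmem⟩)
  simp only [hvdef, Equiv.symm_apply_apply, Pi.zero_apply] at h4
  exact h4
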